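/- In a ball code on a d-dimensional colorable ball B^v in which every (d−1)-simplex is contained in exactly two d-simplices, for every λ ∈ B^v_{d−1} the weight-two operator Z(λ) commutes with all stabilizers, and there exists an edge e ∈ B^v_1 with e ∗ λ a d-simplex, so that Z(λ) anticommutes with the logical operator X(e); hence Z(λ) is a nontrivial logical Z operator and the ball code has distance exactly 2. -/

import Mathlib

/-!
Combinatorial framework for colorable balls in `d`-colexes.

A `d`-colex is a pure `d`-dimensional simplicial complex (faces are finsets of
vertices) whose vertices admit a proper `(d+1)`-coloring.  A colorable `d`-ball
`B^v` consists of the vertex `v` together with all simplices containing it; its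
boundary `∂B^v` consists of the simplices contained in a top simplex of `B^v`
but not containing `v`.  We encode `B^v ∪ ∂B^v` as a `Ball`: a colex in which
every face is contained in a `d`-simplex containing the distinguished vertex.

The associated ball code is the CSS code with a qubit on each `d`-simplex of
`B^v`, one X-stabilizer `X(v)` acting on all qubits, and a Z-stabilizer `Z(μ)`
for each `(d−2)`-simplex `μ ∈ B^v_{d−2}` acting on the `d`-simplices
containing `μ`.
-/

/-- A `d`-dimensional simplicial complex with properly `(d+1)`-colored
vertices. -/
structure ColexComplex (V : Type*) [DecidableEq V] (d : ℕ) where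
  faces : Finset (Finset V)
  nonempty_of_mem : ∀ f ∈ faces, f.Nonempty
  down_closed : ∀ f ∈ faces, ∀ g, g ⊆ f → g.Nonempty → g ∈ faces
  card_le : ∀ f ∈ faces, f.card ≤ d + 1
  col : V → Fin (d + 1)
  proper : ∀ f ∈ faces, ∀ u ∈ f, ∀ w ∈ f, u ≠ w → col u ≠ col w

/-- A colorable `d`-ball `B^v` together with its boundary: a colex with a
distinguished vertex `v` such that every face is contained in some `d`-simplex
containing `v`. -/
structure Ball (V : Type*) [DecidableEq V] (d : ℕ) extends ColexComplex V d where
  v : V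
  v_mem : ({v} : Finset V) ∈ faces
  subset_top : ∀ f ∈ faces, ∃ δ ∈ faces, f ⊆ δ ∧ δ.card = d + 1 ∧ v ∈ δ

namespace Ball

variable {V : Type*} [DecidableEq V] [Fintype V] {d : ℕ}

/-- `B^v_k`: the `k`-simplices of the ball (those containing `v`). -/
def Bk (B : Ball V d) (k : ℕ) : Finset (Finset V) :=
  B.faces.filter fun f => B.v ∈ f ∧ f.card = k + 1

/-- `∂B^v_k`: the `k`-simplices of the boundary (those not containing `v`). -/
def bdryk (B : Ball V d) (k : ℕ) : Finset (Finset V) :=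
  B.faces.filter fun f => B.v ∉ f ∧ f.card = k + 1

/-- The Z-check matrix of the ball code: rows indexed by `(d−2)`-simplices
`μ ∈ B^v_{d−2}`, columns by qubits (`d`-simplices of `B^v`); the entry is `1`
iff `μ ⊆ δ`. -/
def Zmat (B : Ball V d) :
    Matrix {μ // μ ∈ B.Bk (d - 2)} {δ // δ ∈ B.Bk d} (ZMod 2) :=
  fun μ δ => if μ.1 ⊆ δ.1 then 1 else 0

/-- The (Z-part of the) logical operator `X(e)` associated with an edge
`e ∈ B^v_1`: the indicator vector of the `d`-simplices containing `e`. -/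
def xe (B : Ball V d) (e : Finset V) : {δ // δ ∈ B.Bk d} → ZMod 2 :=
  fun δ => if e ⊆ δ.1 then 1 else 0

/-- The weight-two operator `Z(λ)` associated with `λ ∈ B^v_{d−1}`: the
indicator vector of the `d`-simplices containing `λ`. -/
def zlam (B : Ball V d) (lam : Finset V) : {δ // δ ∈ B.Bk d} → ZMod 2 :=
  fun δ => if lam ⊆ δ.1 then 1 else 0

/-- A Pauli with X-part `a` and Z-part `b` commutes with all stabilizers of the
ball code: `a` is orthogonal to every Z-check row and `b` is orthogonal to the
single all-ones X-check `X(v)`. -/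
def InCentralizer (B : Ball V d) (a b : {δ // δ ∈ B.Bk d} → ZMod 2) : Prop :=
  (Zmat B).mulVec a = 0 ∧ (∑ δ, b δ) = 0

/-- A Pauli with X-part `a` and Z-part `b` lies in the stabilizer group of the
ball code: `a` is in the span of the all-ones vector (the X-check `X(v)`) and
`b` is in the span of the Z-check rows. -/
def InStabilizer (B : Ball V d) (a b : {δ // δ ∈ B.Bk d} → ZMod 2) : Prop :=
  a ∈ Submodule.span (ZMod 2)
        ({fun _ => (1 : ZMod 2)} : Set ({δ // δ ∈ B.Bk d} → ZMod 2)) ∧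
  b ∈ Submodule.span (ZMod 2) (Set.range fun μ => (Zmat B) μ)

/-- The weight of a Pauli with X-part `a` and Z-part `b`. -/
def wt (B : Ball V d) (a b : {δ // δ ∈ B.Bk d} → ZMod 2) : ℕ :=
  (Finset.univ.filter fun δ => a δ ≠ 0 ∨ b δ ≠ 0).card

/-- The ball code has distance exactly `2`. -/
def DistanceTwo (B : Ball V d) : Prop :=
  (∀ a b, InCentralizer B a b → ¬ InStabilizer B a b → 2 ≤ wt B a b) ∧
  (∃ a b, InCentralizer B a b ∧ ¬ InStabilizer B a b ∧ wt B a b = 2)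

/-- Each `(d−1)`-simplex of `B^v` lies in exactly two `d`-simplices. -/
def TwoSided (B : Ball V d) : Prop :=
  ∀ lam ∈ B.Bk (d - 1), ((B.Bk d).filter fun δ => lam ⊆ δ).card = 2

/-- The Even Support property: the number of `d`-simplices of `B^v` containing
any given simplex of `B^v` of dimension `< d` is even. -/
def EvenSupport (B : Ball V d) : Prop :=
  ∀ f ∈ B.faces, B.v ∈ f → f.card ≤ d →
    Even (((B.Bk d).filter fun δ => f ⊆ δ).card)

end Ball

open Ball

section Aux

variable {V : Type*} [DecidableEq V] [Fintype V] {d : ℕ}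

lemma card_filter_subtype (B : Ball V d) (p : Finset V → Prop) [DecidablePred p] :
    (Finset.univ.filter fun x : {δ // δ ∈ B.Bk d} => p x.1).card
      = ((B.Bk d).filter p).card := by
  apply Finset.card_bij (fun x _ => x.1)
  · intro a ha
    simp only [Finset.mem_filter, Finset.mem_univ, true_and] at ha
    exact Finset.mem_filter.mpr ⟨a.2, ha⟩
  · intro a _ b _ h; exact Subtype.ext h
  · intro b hb
    rcases Finset.mem_filter.mp hb with ⟨h1, h2⟩
    exact ⟨⟨b, h1⟩, by simpa using h2, rfl⟩

lemma sum_indicator (B : Ball V d) (p : Finset V → Prop) [DecidablePred p] :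
    (∑ δ : {δ // δ ∈ B.Bk d}, (if p δ.1 then (1 : ZMod 2) else 0))
      = (((B.Bk d).filter p).card : ZMod 2) := by
  rw [Finset.sum_boole, ← card_filter_subtype B p]

lemma indicator_mul (p q : Prop) [Decidable p] [Decidable q] :
    (if p then (1 : ZMod 2) else 0) * (if q then 1 else 0)
      = if p ∧ q then 1 else 0 := by
  split_ifs <;> simp_all

end Aux


/-- In a ball code on a `d`-dimensional colorable ball `B^v`
in which every `(d−1)`-simplex lies in exactly two `d`-simplices, for every
`λ ∈ B^v_{d−1}`: the operator `Z(λ)` has weight two; it commutes with all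
stabilizers; there is an edge `e ∈ B^v_1` with `e ∗ λ` a `d`-simplex, and
`Z(λ)` anticommutes with the logical operator `X(e)` (odd overlap); hence
`Z(λ)` is a nontrivial logical Z operator, and the ball code has distance
exactly 2. -/
theorem ball_code_logical_Z_weight_two {V : Type*} [DecidableEq V] [Fintype V]
    {d : ℕ} (hd : 2 ≤ d) (B : Ball V d)
    (h2 : B.TwoSided) (hES : B.EvenSupport)
    (lam : Finset V) (hlam : lam ∈ B.Bk (d - 1)) :
    wt B 0 (zlam B lam) = 2 ∧
    InCentralizer B 0 (zlam B lam) ∧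
    (∃ e ∈ B.Bk 1, e ∪ lam ∈ B.Bk d ∧
      (∑ δ, xe B e δ * zlam B lam δ) = 1) ∧
    ¬ InStabilizer B 0 (zlam B lam) ∧
    B.DistanceTwo := by
  classical
  obtain ⟨hlamf, hvlam, hlamcard⟩ := Finset.mem_filter.mp hlam
  have hlc : lam.card = d := by omega
  -- the two d-simplices containing lam
  obtain ⟨δ1, δ2, hne12, hset⟩ := Finset.card_eq_two.mp (h2 lam hlam)
  have hδ1mem : δ1 ∈ (B.Bk d).filter fun δ => lam ⊆ δ := by
    rw [hset]; exact Finset.mem_insert_self _ _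
  have hδ2mem : δ2 ∈ (B.Bk d).filter fun δ => lam ⊆ δ := by
    rw [hset]; exact Finset.mem_insert_of_mem (Finset.mem_singleton_self _)
  obtain ⟨hδ1Bk, hsub1⟩ := Finset.mem_filter.mp hδ1mem
  obtain ⟨hδ2Bk, hsub2⟩ := Finset.mem_filter.mp hδ2mem
  obtain ⟨hδ1f, hvδ1, hδ1c⟩ := Finset.mem_filter.mp hδ1Bk
  obtain ⟨hδ2f, hvδ2, hδ2c⟩ := Finset.mem_filter.mp hδ2Bk
  -- pick u ∈ δ1 \ lam
  have hss : lam ⊂ δ1 := lt_of_le_of_ne hsub1 (fun h => by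
    rw [h] at hlc; omega)
  obtain ⟨u, huδ1, hulam⟩ := Finset.exists_of_ssubset hss
  have hvu : B.v ≠ u := fun h => hulam (h ▸ hvlam)
  set e : Finset V := {B.v, u} with he_def
  have hec : e.card = 2 := Finset.card_pair hvu
  have hesub1 : e ⊆ δ1 := by
    intro x hx
    rcases Finset.mem_insert.mp hx with rfl | hx
    · exact hsub1 hvlam
    · rwa [Finset.mem_singleton.mp hx]
  have hef : e ∈ B.faces :=
    B.down_closed δ1 hδ1f e hesub1 ⟨B.v, Finset.mem_insert_self _ _⟩
  have heBk : e ∈ B.Bk 1 :=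
    Finset.mem_filter.mpr ⟨hef, Finset.mem_insert_self _ _, hec⟩
  -- insert u lam = δ1
  have hins : insert u lam = δ1 := by
    apply Finset.eq_of_subset_of_card_le
    · exact Finset.insert_subset huδ1 hsub1
    · rw [Finset.card_insert_of_notMem hulam, hlc, hδ1c]
  have heul : e ∪ lam = δ1 := by
    apply Finset.Subset.antisymm
    · exact Finset.union_subset hesub1 hsub1
    · rw [← hins]
      intro x hx
      rcases Finset.mem_insert.mp hx with rfl | hx
      · exact Finset.mem_union_left _ (Finset.mem_insert_of_mem (Finset.mem_singleton_self _))
      · exact Finset.mem_union_right _ hx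
  have huδ2 : u ∉ δ2 := by
    intro hu
    apply hne12
    apply Finset.eq_of_subset_of_card_le
    · rw [← hins]; exact Finset.insert_subset hu hsub2
    · rw [hδ1c, hδ2c]
  -- the filter for the overlap
  have hfilt : ((B.Bk d).filter fun δ => e ⊆ δ ∧ lam ⊆ δ) = {δ1} := by
    ext δ
    simp only [Finset.mem_filter, Finset.mem_singleton]
    constructor
    · rintro ⟨hδ, heδ, hlδ⟩
      have : δ ∈ ({δ1, δ2} : Finset (Finset V)) := by
        rw [← hset]; exact Finset.mem_filter.mpr ⟨hδ, hlδ⟩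
      rcases Finset.mem_insert.mp this with rfl | h
      · rfl
      · rw [Finset.mem_singleton.mp h] at heδ
        exact absurd (heδ (Finset.mem_insert_of_mem (Finset.mem_singleton_self _))) huδ2
    · rintro rfl
      exact ⟨hδ1Bk, hesub1, hsub1⟩
  have hoverlap : (∑ δ, xe B e δ * zlam B lam δ) = 1 := by
    have heq : ∀ δ : {δ // δ ∈ B.Bk d},
        xe B e δ * zlam B lam δ = if e ⊆ δ.1 ∧ lam ⊆ δ.1 then (1 : ZMod 2) else 0 := by
      intro δ
      simp only [xe, zlam]
      exact indicator_mul _ _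
    rw [Finset.sum_congr rfl (fun δ _ => heq δ),
      sum_indicator B (fun f => e ⊆ f ∧ lam ⊆ f), hfilt]
    simp
  -- weight two
  have hwt : wt B 0 (zlam B lam) = 2 := by
    unfold wt
    have : (Finset.univ.filter fun δ : {δ // δ ∈ B.Bk d} =>
        (0 : {δ // δ ∈ B.Bk d} → ZMod 2) δ ≠ 0 ∨ zlam B lam δ ≠ 0)
        = Finset.univ.filter fun δ => lam ⊆ δ.1 := by
      apply Finset.filter_congr
      intro δ _
      simp only [Pi.zero_apply, ne_eq, not_true_eq_false, zlam]
      split_ifs with h <;> simp [h]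
    rw [this, card_filter_subtype B (fun f => lam ⊆ f), h2 lam hlam]
  -- centralizer
  have hcen : InCentralizer B 0 (zlam B lam) := by
    constructor
    · exact Matrix.mulVec_zero _
    · show (∑ δ : {δ // δ ∈ B.Bk d}, (if lam ⊆ δ.1 then (1 : ZMod 2) else 0)) = 0
      rw [sum_indicator B (fun f => lam ⊆ f), h2 lam hlam]
      decide
  -- orthogonality of Z-check rows to xe e
  have key : ∀ b' ∈ Submodule.span (ZMod 2) (Set.range fun μ => Zmat B μ),
      (∑ δ, xe B e δ * b' δ) = 0 := by
    intro b' hb'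
    induction hb' using Submodule.span_induction with
    | mem x hx =>
      obtain ⟨μ, rfl⟩ := hx
      have heq : ∀ δ : {δ // δ ∈ B.Bk d},
          xe B e δ * Zmat B μ δ = if e ⊆ δ.1 ∧ μ.1 ⊆ δ.1 then (1 : ZMod 2) else 0 := by
        intro δ
        simp only [xe, Zmat]
        exact indicator_mul _ _
      rw [Finset.sum_congr rfl (fun δ _ => heq δ),
        sum_indicator B (fun f => e ⊆ f ∧ μ.1 ⊆ f)]
      obtain ⟨hμf, hvμ, hμc⟩ := Finset.mem_filter.mp μ.2
      by_cases hS : ((B.Bk d).filter fun f => e ⊆ f ∧ μ.1 ⊆ f).Nonempty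
      · obtain ⟨δ, hδ⟩ := hS
        obtain ⟨hδBk, heδ, hμδ⟩ := Finset.mem_filter.mp hδ
        obtain ⟨hδf, hvδ, hδc⟩ := Finset.mem_filter.mp hδBk
        have hfeq : e ∪ μ.1 = insert u μ.1 := by
          ext a
          simp only [he_def, Finset.mem_union, Finset.mem_insert,
            Finset.mem_singleton]
          constructor
          · rintro ((rfl | rfl) | h)
            · exact Or.inr hvμ
            · exact Or.inl rfl
            · exact Or.inr h
          · rintro (rfl | h)
            · exact Or.inl (Or.inr rfl)
            · exact Or.inr h
        have hfsub : e ∪ μ.1 ⊆ δ := Finset.union_subset heδ hμδ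
        have hff : e ∪ μ.1 ∈ B.faces :=
          B.down_closed δ hδf _ hfsub ⟨B.v, Finset.mem_union_left _ (Finset.mem_insert_self _ _)⟩
        have hcard : (e ∪ μ.1).card ≤ d := by
          rw [hfeq]
          calc (insert u μ.1).card ≤ μ.1.card + 1 := Finset.card_insert_le _ _
            _ ≤ d := by omega
        have heven := hES _ hff (Finset.mem_union_left _ (Finset.mem_insert_self _ _)) hcard
        have hfilteq : ((B.Bk d).filter fun f => e ⊆ f ∧ μ.1 ⊆ f)
            = (B.Bk d).filter fun f => e ∪ μ.1 ⊆ f := by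
          apply Finset.filter_congr
          intro f _
          exact (Finset.union_subset_iff).symm
        rw [hfilteq]
        obtain ⟨k, hk⟩ := heven
        rw [hk, Nat.cast_add, CharTwo.add_self_eq_zero]
      · rw [Finset.not_nonempty_iff_eq_empty.mp hS]
        simp
    | zero => simp
    | add x y _ _ hx hy =>
      have hsum : (∑ δ, xe B e δ * (x + y) δ)
          = (∑ δ, xe B e δ * x δ) + ∑ δ, xe B e δ * y δ := by
        rw [← Finset.sum_add_distrib]
        exact Finset.sum_congr rfl fun δ _ => by rw [Pi.add_apply, mul_add]
      rw [hsum, hx, hy, add_zero]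
    | smul c x _ hx =>
      have : ∀ δ : {δ // δ ∈ B.Bk d}, xe B e δ * (c • x) δ = c * (xe B e δ * x δ) := by
        intro δ; rw [Pi.smul_apply, smul_eq_mul]; ring
      rw [Finset.sum_congr rfl (fun δ _ => this δ), ← Finset.mul_sum, hx, mul_zero]
  -- not in stabilizer
  have hstabZ : ¬ InStabilizer B 0 (zlam B lam) := by
    rintro ⟨-, hb⟩
    have := key _ hb
    rw [hoverlap] at this
    exact one_ne_zero this
  -- distance lower bound helper: weight ≤ 1 centralizer elements are in stabilizer
  have hlower : ∀ a b, InCentralizer B a b → ¬ InStabilizer B a b → 2 ≤ wt B a b := by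
    intro a b hc hs
    by_contra hlt
    push_neg at hlt
    by_cases h0 : wt B a b = 0
    · apply hs
      have hempty := Finset.card_eq_zero.mp h0
      have hall : ∀ δ, a δ = 0 ∧ b δ = 0 := by
        intro δ
        by_contra h
        push_neg at h
        have hδm : δ ∈ Finset.univ.filter fun δ => a δ ≠ 0 ∨ b δ ≠ 0 := by
          refine Finset.mem_filter.mpr ⟨Finset.mem_univ _, ?_⟩
          by_cases ha : a δ = 0
          · exact Or.inr (h ha)
          · exact Or.inl ha
        rw [hempty] at hδm
        exact absurd hδm (Finset.notMem_empty _)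
      have ha0 : a = 0 := funext fun δ => (hall δ).1
      have hb0 : b = 0 := funext fun δ => (hall δ).2
      rw [ha0, hb0]
      exact ⟨Submodule.zero_mem _, Submodule.zero_mem _⟩
    · have h1 : wt B a b = 1 := by omega
      obtain ⟨δ0, hδ0⟩ := Finset.card_eq_one.mp h1
      have hzero : ∀ δ, δ ≠ δ0 → a δ = 0 ∧ b δ = 0 := by
        intro δ hne
        by_contra h
        push_neg at h
        have hδm : δ ∈ Finset.univ.filter fun δ => a δ ≠ 0 ∨ b δ ≠ 0 := by
          refine Finset.mem_filter.mpr ⟨Finset.mem_univ _, ?_⟩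
          by_cases ha : a δ = 0
          · exact Or.inr (h ha)
          · exact Or.inl ha
        rw [hδ0] at hδm
        exact hne (Finset.mem_singleton.mp hδm)
      have hbδ0 : b δ0 = 0 := by
        have hsum := hc.2
        rwa [Finset.sum_eq_single δ0 (fun δ _ hne => (hzero δ hne).2)
          (fun h => absurd (Finset.mem_univ δ0) h)] at hsum
      have haδ0 : a δ0 = 1 := by
        have hδ0m : δ0 ∈ Finset.univ.filter fun δ => a δ ≠ 0 ∨ b δ ≠ 0 := by
          rw [hδ0]; exact Finset.mem_singleton_self _
        have := (Finset.mem_filter.mp hδ0m).2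
        rcases this with h | h
        · revert h; generalize a δ0 = x; revert x; decide
        · exact absurd hbδ0 h
      -- build μ ∈ Bk (d-2) with μ ⊆ δ0
      obtain ⟨hδ0f, hvδ0, hδ0c⟩ := Finset.mem_filter.mp δ0.2
      have hec' : (δ0.1.erase B.v).card = d := by
        rw [Finset.card_erase_of_mem hvδ0, hδ0c]; omega
      obtain ⟨s, hssub, hsc⟩ := Finset.exists_subset_card_eq (s := δ0.1.erase B.v) (n := d - 2)
        (by omega)
      have hvs : B.v ∉ s := fun h => (Finset.mem_erase.mp (hssub h)).1 rfl
      set μ : Finset V := insert B.v s with hμ_def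
      have hμsub : μ ⊆ δ0.1 :=
        Finset.insert_subset hvδ0 (hssub.trans (Finset.erase_subset _ _))
      have hμf : μ ∈ B.faces :=
        B.down_closed δ0.1 hδ0f μ hμsub ⟨B.v, Finset.mem_insert_self _ _⟩
      have hμBk : μ ∈ B.Bk (d - 2) := by
        refine Finset.mem_filter.mpr ⟨hμf, Finset.mem_insert_self _ _, ?_⟩
        rw [Finset.card_insert_of_notMem hvs, hsc]
      have hmv : (Zmat B).mulVec a ⟨μ, hμBk⟩ = 0 := by
        rw [hc.1]; rfl
      have hval : (Zmat B).mulVec a ⟨μ, hμBk⟩ = 1 := by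
        show (∑ δ, Zmat B ⟨μ, hμBk⟩ δ * a δ) = 1
        rw [Finset.sum_eq_single δ0
          (fun δ _ hne => by rw [(hzero δ hne).1, mul_zero])
          (fun h => absurd (Finset.mem_univ δ0) h)]
        rw [haδ0, mul_one]
        simp only [Zmat]
        rw [if_pos hμsub]
      rw [hval] at hmv
      exact one_ne_zero hmv
  refine ⟨hwt, hcen, ⟨e, heBk, ?_, hoverlap⟩, hstabZ, hlower, 0, zlam B lam, hcen, hstabZ, hwt⟩
  rw [heul]
  exact hδ1Bk
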